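/- arXiv:2505.06705 — 4 statements merged into one kernel-verified Lean document; each statement's English description precedes it below -/
import Mathlib

section
/- Let q ≥ 0 be an integer and let J' be a finite set of positive integers that is a disjoint union of singletons {2^i} and pairs {a, b} with a + b a power of 2, such that J' ∩ [1, 2^q] ⊆ {2^i : 0 ≤ i ≤ q−1}. Then there exists an integer m with 0 ≤ m ≤ 2^q − 1 such that the sum of the elements of J' is congruent to m modulo 2^{q+1}. -/
/-- `J` decomposes as a disjoint union of singletons `{2^i}` and pairs `{a, b}`
with `a + b` a power of 2. -/
def TotaroDecomp (J : Finset ℕ) : Prop :=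
  ∃ P : Finset (Finset ℕ),
    (P : Set (Finset ℕ)).PairwiseDisjoint id ∧
    P.biUnion id = J ∧
    ∀ p ∈ P, (∃ i : ℕ, p = {2 ^ i}) ∨
      (∃ a b c : ℕ, a ≠ b ∧ p = {a, b} ∧ a + b = 2 ^ c)

lemma two_pow_add_two_pow_ne {i j c : ℕ} (h : i ≠ j) : 2 ^ i + 2 ^ j ≠ 2 ^ c := by
  wlog hij : i < j generalizing i j
  · rw [Nat.add_comm]; exact this h.symm (by omega)
  intro hc
  have h0 : 0 < 2 ^ i := Nat.pow_pos (by norm_num)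
  have h1 : 2 ^ j < 2 ^ c := by omega
  have hc' : j < c := (Nat.pow_lt_pow_iff_right one_lt_two).1 h1
  have h3 : 2 ^ (j + 1) ≤ 2 ^ c := Nat.pow_le_pow_right (by norm_num) hc'
  have h2 : 2 ^ i < 2 ^ j := Nat.pow_lt_pow_right one_lt_two hij
  rw [pow_succ] at h3
  omega

lemma geom_two_sum (q : ℕ) : ∑ i ∈ Finset.range q, 2 ^ i = 2 ^ q - 1 := by
  induction q with
  | zero => simp
  | succ n ih =>
    rw [Finset.sum_range_succ, ih, pow_succ]
    have : 0 < 2 ^ n := Nat.pow_pos (by norm_num)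
    omega

theorem stmt_7 (q : ℕ) (J' : Finset ℕ) (hpos : ∀ x ∈ J', 0 < x)
    (hdec : TotaroDecomp J')
    (hsmall : ∀ x ∈ J', x ≤ 2 ^ q → ∃ i : ℕ, i < q ∧ x = 2 ^ i) :
    ∃ m : ℕ, m ≤ 2 ^ q - 1 ∧ (∑ x ∈ J', x) ≡ m [MOD 2 ^ (q + 1)] := by
  classical
  obtain ⟨P, hdisj, hunion, hparts⟩ := hdec
  have hmem : ∀ p ∈ P, ∀ x ∈ p, x ∈ J' := by
    intro p hp x hx
    rw [← hunion]; exact Finset.mem_biUnion.2 ⟨p, hp, hx⟩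
  set pred : Finset ℕ → Prop := fun p => ∃ i, i < q ∧ p = {2 ^ i} with hpred
  set S := P.filter pred with hS
  set m := ∑ p ∈ S, ∑ x ∈ p, x with hm
  refine ⟨m, ?_, ?_⟩
  · -- m ≤ 2^q - 1
    have hdisjS : (S : Set (Finset ℕ)).PairwiseDisjoint id :=
      hdisj.subset (by intro p hp; simp [hS, Finset.coe_filter] at hp; exact hp.1)
    have hm2 : m = ∑ x ∈ S.biUnion id, x := (Finset.sum_biUnion hdisjS).symm
    have hsub : S.biUnion id ⊆ (Finset.range q).image (2 ^ ·) := by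
      intro x hx
      obtain ⟨p, hp, hxp⟩ := Finset.mem_biUnion.1 hx
      obtain ⟨-, i, hi, rfl⟩ := Finset.mem_filter.1 hp
      simp only [id, Finset.mem_singleton] at hxp
      exact Finset.mem_image.2 ⟨i, Finset.mem_range.2 hi, hxp.symm⟩
    calc m ≤ ∑ x ∈ (Finset.range q).image (2 ^ ·), x := by
              rw [hm2]; exact Finset.sum_le_sum_of_subset hsub
      _ = ∑ i ∈ Finset.range q, 2 ^ i :=
          Finset.sum_image (fun a _ b _ h => Nat.pow_right_injective (by norm_num) h)
      _ = 2 ^ q - 1 := geom_two_sum q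
  · -- modular equation
    have hsum : ∑ x ∈ J', x = ∑ p ∈ P, ∑ x ∈ p, x := by
      rw [← hunion]; exact Finset.sum_biUnion hdisj
    have hsplit : ∑ p ∈ P, ∑ x ∈ p, x
        = m + ∑ p ∈ P.filter (fun p => ¬ pred p), ∑ x ∈ p, x := by
      rw [hm, hS]
      exact (Finset.sum_filter_add_sum_filter_not P pred _).symm
    have hdvd : 2 ^ (q + 1) ∣ ∑ p ∈ P.filter (fun p => ¬ pred p), ∑ x ∈ p, x := by
      refine Finset.dvd_sum ?_
      intro p hp
      obtain ⟨hpP, hnp⟩ := Finset.mem_filter.1 hp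
      rcases hparts p hpP with ⟨i, rfl⟩ | ⟨a, b, c, hab, rfl, habc⟩
      · -- singleton
        have hiq : ¬ i < q := fun h => hnp ⟨i, h, rfl⟩
        have h2q : 2 ^ i ∈ J' := hmem _ hpP _ (Finset.mem_singleton_self _)
        have hiq' : i ≠ q := by
          rintro rfl
          obtain ⟨j, hj, hje⟩ := hsmall _ h2q le_rfl
          have := Nat.pow_right_injective (le_refl 2) hje
          omega
        have : q + 1 ≤ i := by omega
        simpa using pow_dvd_pow 2 this
      · -- pair
        rw [Finset.sum_pair hab, habc]
        have hc : q + 1 ≤ c := by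
          by_contra hcon
          have hcq : c ≤ q := by omega
          have hle : 2 ^ c ≤ 2 ^ q := Nat.pow_le_pow_right (by norm_num) hcq
          have haJ : a ∈ J' := hmem _ hpP _ (by simp)
          have hbJ : b ∈ J' := hmem _ hpP _ (by simp)
          have hb0 := hpos _ hbJ
          have ha0 := hpos _ haJ
          obtain ⟨i, hi, rfl⟩ := hsmall _ haJ (by omega)
          obtain ⟨j, hj, rfl⟩ := hsmall _ hbJ (by omega)
          exact two_pow_add_two_pow_ne (fun h => hab (by rw [h])) habc
        exact pow_dvd_pow 2 hc
    rw [hsum, hsplit]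
    exact ((Nat.modEq_iff_dvd' (Nat.le_add_right _ _)).2 (by simpa using hdvd)).symm
end

section
/- Let F be the polynomial ring over the field with two elements in variables c_1, …, c_N, and let I be the ideal generated by the squares c_j^2 for 1 ≤ j ≤ N. For any k with 1 ≤ k ≤ N, the sum over all compositions (i_1, …, i_s) of k with all parts at most N of the products c_{i_1}·…·c_{i_s} is congruent to c_k modulo I. -/
open MvPolynomial

/-- Swap the first two entries of a list. -/
def swapFirstTwo : List ℕ → List ℕ
  | a :: b :: t => b :: a :: t
  | l => l

lemma swapFirstTwo_perm (l : List ℕ) : (swapFirstTwo l).Perm l := by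
  match l with
  | [] => exact List.Perm.refl _
  | [a] => exact List.Perm.refl _
  | a :: b :: t => exact List.Perm.swap a b t

lemma swapFirstTwo_swapFirstTwo (l : List ℕ) : swapFirstTwo (swapFirstTwo l) = l := by
  match l with
  | [] => rfl
  | [a] => rfl
  | a :: b :: t => rfl

lemma swapFirstTwo_ne (l : List ℕ) (hnd : l.Nodup) (hl : 2 ≤ l.length) :
    swapFirstTwo l ≠ l := by
  match l with
  | [] => simp at hl
  | [a] => simp at hl
  | a :: b :: t =>
    have hab : a ≠ b := by
      simp only [List.nodup_cons, List.mem_cons] at hnd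
      exact fun h => hnd.1 (Or.inl h)
    simp only [swapFirstTwo, ne_eq, List.cons.injEq]
    tauto

/-- Swap the first two blocks of a composition. -/
def swapComp {k : ℕ} (c : Composition k) : Composition k where
  blocks := swapFirstTwo c.blocks
  blocks_pos := fun hi => c.blocks_pos ((swapFirstTwo_perm c.blocks).mem_iff.mp hi)
  blocks_sum := by rw [(swapFirstTwo_perm c.blocks).sum_eq, c.blocks_sum]

theorem stmt_14 (N : ℕ) (hN : 1 ≤ N) (k : ℕ) (hk : 1 ≤ k) (hkN : k ≤ N)
    (I : Ideal (MvPolynomial ℕ (ZMod 2)))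
    (hI : I = Ideal.span {p | ∃ j : ℕ, 1 ≤ j ∧ j ≤ N ∧ p = (X j : MvPolynomial ℕ (ZMod 2)) ^ 2}) :
    (∑ cmp : Composition k,
        if ∀ p ∈ cmp.blocks, p ≤ N then ((cmp.blocks.map X).prod : MvPolynomial ℕ (ZMod 2)) else 0)
      - X k ∈ I := by
  classical
  set f : Composition k → MvPolynomial ℕ (ZMod 2) := fun cmp =>
    if ∀ p ∈ cmp.blocks, p ≤ N then ((cmp.blocks.map X).prod : MvPolynomial ℕ (ZMod 2)) else 0
    with hf
  -- f is invariant under permutation of blocks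
  have hfswap : ∀ c : Composition k, f (swapComp c) = f c := by
    intro c
    have hperm : ((swapComp c).blocks).Perm c.blocks := swapFirstTwo_perm c.blocks
    simp only [hf]
    have hcond : (∀ p ∈ (swapComp c).blocks, p ≤ N) ↔ (∀ p ∈ c.blocks, p ≤ N) := by
      constructor <;> intro h p hp
      · exact h p (hperm.mem_iff.mpr hp)
      · exact h p (hperm.mem_iff.mp hp)
    have hprod : ((swapComp c).blocks.map X).prod
        = ((c.blocks.map X).prod : MvPolynomial ℕ (ZMod 2)) :=
      (hperm.map (X : ℕ → MvPolynomial ℕ (ZMod 2))).prod_eq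
    rw [hprod]
    simp only [hcond]
  -- split the sum
  have hsplit := Finset.sum_filter_add_sum_filter_not Finset.univ
    (fun c : Composition k => c.blocks.Nodup) f
  -- the non-nodup part lies in I
  have hmemI : (∑ c ∈ Finset.univ.filter (fun c : Composition k => ¬ c.blocks.Nodup), f c) ∈ I := by
    refine Ideal.sum_mem I ?_
    intro c hc
    simp only [Finset.mem_filter] at hc
    by_cases hcond : ∀ p ∈ c.blocks, p ≤ N
    · -- there is a duplicated block p, and X p ^ 2 divides the product
      obtain ⟨p, hp⟩ := List.exists_duplicate_iff_not_nodup.mpr hc.2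
      have hcount : 2 ≤ c.blocks.count p := List.duplicate_iff_two_le_count.mp hp
      have hpmem : p ∈ c.blocks := hp.mem
      have hdvd : (X p : MvPolynomial ℕ (ZMod 2)) ^ 2 ∣ (c.blocks.map X).prod := by
        have hle : (Multiset.replicate 2 (X p : MvPolynomial ℕ (ZMod 2)))
            ≤ ((c.blocks.map (X : ℕ → MvPolynomial ℕ (ZMod 2))) : Multiset (MvPolynomial ℕ (ZMod 2))) := by
          rw [Multiset.le_iff_count]
          intro a
          rcases eq_or_ne a (X p) with rfl | ha
          · rw [Multiset.count_replicate_self, Multiset.coe_count,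
              List.count_map_of_injective _ _ X_injective]
            exact hcount
          · simp [Multiset.count_replicate, Multiset.count_cons, Multiset.count_singleton, Ne.symm ha, ha]
        have := Multiset.prod_dvd_prod_of_le hle
        simpa [Multiset.prod_replicate, sq] using this
      have hXp : (X p : MvPolynomial ℕ (ZMod 2)) ^ 2 ∈ I := by
        rw [hI]
        exact Ideal.subset_span ⟨p, c.blocks_pos hpmem, hcond p hpmem, rfl⟩
      obtain ⟨q, hq⟩ := hdvd
      simp only [hf, if_pos hcond]
      rw [hq]
      exact Ideal.mul_mem_right _ _ hXp
    · simp only [hf, if_neg hcond]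
      exact Ideal.zero_mem I
  -- the nodup part: split by length
  have hsplit2 := Finset.sum_filter_add_sum_filter_not
    (Finset.univ.filter (fun c : Composition k => c.blocks.Nodup))
    (fun c : Composition k => 2 ≤ c.blocks.length) f
  -- length ≥ 2 part vanishes (char 2, swap involution)
  have hzero : (∑ c ∈ (Finset.univ.filter (fun c : Composition k => c.blocks.Nodup)).filter
      (fun c : Composition k => 2 ≤ c.blocks.length), f c) = 0 := by
    refine Finset.sum_involution (fun c _ => swapComp c) ?_ ?_ ?_ ?_
    · intro c _
      rw [hfswap]
      exact CharTwo.add_self_eq_zero _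
    · intro c hc hfc
      simp only [Finset.mem_filter] at hc
      intro heq
      exact swapFirstTwo_ne c.blocks hc.1.2 hc.2 (congrArg Composition.blocks heq)
    · intro c hc
      simp only [Finset.mem_filter] at hc ⊢
      have hperm : ((swapComp c).blocks).Perm c.blocks := swapFirstTwo_perm c.blocks
      exact ⟨⟨Finset.mem_univ _, hperm.nodup_iff.mpr hc.1.2⟩, by
        rw [hperm.length_eq]; exact hc.2⟩
    · intro c _
      apply Composition.ext
      exact swapFirstTwo_swapFirstTwo c.blocks
  -- the remaining set is exactly the single composition
  have hsingle : (Finset.univ.filter (fun c : Composition k => c.blocks.Nodup)).filter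
      (fun c : Composition k => ¬ 2 ≤ c.blocks.length) = {Composition.single k hk} := by
    ext c
    simp only [Finset.mem_filter, Finset.mem_univ, true_and, Finset.mem_singleton, not_le]
    constructor
    · rintro ⟨-, hlen⟩
      have hne : c.blocks ≠ [] := by
        intro h
        have := c.blocks_sum
        rw [h] at this
        simp at this
        omega
      have hlen1 : c.blocks.length = 1 := by
        have := List.length_pos_iff.mpr hne
        omega
      obtain ⟨a, ha⟩ := List.length_eq_one_iff.mp hlen1
      have hak : a = k := by
        have := c.blocks_sum
        rw [ha] at this
        simpa using this
      apply Composition.ext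
      rw [ha, hak, Composition.single_blocks]
    · rintro rfl
      simp [Composition.single_blocks]
  have hfsingle : f (Composition.single k hk) = X k := by
    simp only [hf]
    rw [if_pos]
    · simp
    · intro p hp
      simp only [Composition.single_blocks, List.mem_singleton] at hp
      exact hp ▸ hkN
  have : (∑ cmp : Composition k, f cmp) = (∑ c ∈ Finset.univ.filter
      (fun c : Composition k => ¬ c.blocks.Nodup), f c) + X k := by
    rw [← hsplit, ← hsplit2, hzero, hsingle, Finset.sum_singleton, hfsingle]
    ring
  rw [hf] at this
  rw [this]
  simpa using hmemI
end

section
/- Let n ≥ 2, let F_2 be the field with two elements, and let A = F_2[c_1, …, c_{n−1}][t]/(t^n + c_1 t^{n−1} + c_2 t^{n−2} + ⋯ + c_{n−1} t). For every integer k ≥ 1, in A one has t^{n−1+k} = Σ_{j=1}^{n−1} t^{n−j} · S_{k+j−1, j}, where S_{m,j} denotes the sum over all compositions (i_1, …, i_s) of m with i_1 ≥ j and all parts at most n−1 of the products c_{i_1}⋯c_{i_s}. -/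
open MvPolynomial

/-- Sum over all compositions of `m` with first part at least `j` and all parts
at most `n - 1` of the products of the corresponding variables. -/
noncomputable def compSumLE (n m j : ℕ) : MvPolynomial ℕ (ZMod 2) :=
  ∑ cmp : Composition m,
    if j ≤ cmp.blocks.headI ∧ ∀ p ∈ cmp.blocks, p ≤ n - 1 then
      ((cmp.blocks.map X).prod : MvPolynomial ℕ (ZMod 2))
    else 0

private lemma headI_mem' {l : List ℕ} (h : l ≠ []) : l.headI ∈ l := by
  cases l with
  | nil => exact absurd rfl h
  | cons a t => exact List.mem_cons_self

private lemma list_eq_headI_cons {l : List ℕ} (h : l ≠ []) : l = l.headI :: l.tail := by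
  cases l with
  | nil => exact absurd rfl h
  | cons a t => rfl

private lemma blocks_ne_nil {m : ℕ} (hm : 0 < m) (a : Composition m) : a.blocks ≠ [] := by
  intro hb
  have h := a.blocks_sum
  rw [hb] at h
  simp at h
  omega

private lemma blocks_sum_eq {m : ℕ} (hm : 0 < m) (a : Composition m) :
    a.blocks.headI + a.blocks.tail.sum = m := by
  obtain ⟨x, t, hb⟩ : ∃ x t, a.blocks = x :: t := by
    cases h : a.blocks with
    | nil => exact absurd h (blocks_ne_nil hm a)
    | cons x t => exact ⟨x, t, rfl⟩
  have h := a.blocks_sum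
  rw [hb] at h ⊢
  simpa using h

private lemma headI_pos {m : ℕ} (hm : 0 < m) (a : Composition m) : 0 < a.blocks.headI :=
  a.blocks_pos (headI_mem' (blocks_ne_nil hm a))

private def consComp' (m j : ℕ) (hj : 0 < j) (hjm : j ≤ m) (c : Composition (m - j)) :
    Composition m where
  blocks := j :: c.blocks
  blocks_pos := by
    intro i hi
    rcases List.mem_cons.1 hi with h | h
    · rw [h]; exact hj
    · exact c.blocks_pos h
  blocks_sum := by
    rw [List.sum_cons, c.blocks_sum]; omega

private def tailCompJ (m j : ℕ) (hjm : j < m) (a : Composition m) : Composition (m - j) :=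
  if h : a.blocks.headI = j then
    { blocks := a.blocks.tail
      blocks_pos := fun hi => a.blocks_pos (List.mem_of_mem_tail hi)
      blocks_sum := by
        have hs := blocks_sum_eq (show 0 < m by omega) a
        omega }
  else Composition.single (m - j) (by omega)

private lemma tailCompJ_blocks {m j : ℕ} (hjm : j < m) (a : Composition m)
    (h : a.blocks.headI = j) : (tailCompJ m j hjm a).blocks = a.blocks.tail := by
  unfold tailCompJ
  rw [dif_pos h]

private lemma compSumLE_top (n m : ℕ) (hn : 2 ≤ n) (hm : 1 ≤ m) : compSumLE n m n = 0 := by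
  unfold compSumLE
  refine Finset.sum_eq_zero fun cmp _ => ?_
  rw [if_neg]
  rintro ⟨h1, h2⟩
  have := h2 _ (headI_mem' (blocks_ne_nil (show 0 < m by omega) cmp))
  omega

private lemma compSumLE_self (n j : ℕ) (hj : 1 ≤ j) (hjn : j ≤ n - 1) :
    compSumLE n j j = X j := by
  unfold compSumLE
  refine (Finset.sum_eq_single_of_mem (Composition.single j (by omega))
    (Finset.mem_univ _) ?_).trans ?_
  · intro b _ hb
    rw [if_neg]
    rintro ⟨h1, h2⟩
    apply hb
    have hne := blocks_ne_nil (show 0 < j by omega) b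
    have hsum := blocks_sum_eq (show 0 < j by omega) b
    have htail : b.blocks.tail.sum = 0 := by omega
    have hheadI : b.blocks.headI = j := by omega
    have htn : b.blocks.tail = [] := by
      by_contra hcon
      obtain ⟨x, t, hxt⟩ := List.exists_cons_of_ne_nil hcon
      have hx : 0 < x := b.blocks_pos (List.mem_of_mem_tail (by rw [hxt]; exact List.mem_cons_self))
      have : x ≤ b.blocks.tail.sum := by rw [hxt, List.sum_cons]; omega
      omega
    apply Composition.ext
    rw [list_eq_headI_cons hne, htn, hheadI]
    simp [Composition.single]
  · rw [if_pos]
    · simp [Composition.single]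
    · constructor
      · simp [Composition.single]
      · intro p hp
        simp [Composition.single] at hp
        omega

private lemma compSumLE_split (n m j : ℕ) (hj : 1 ≤ j) (hjn : j ≤ n - 1) (hjm : j < m) :
    compSumLE n m j = compSumLE n m (j + 1) + X j * compSumLE n (m - j) 1 := by
  have hE : compSumLE n m j = compSumLE n m (j + 1) +
      ∑ cmp : Composition m,
        (if cmp.blocks.headI = j ∧ ∀ p ∈ cmp.blocks, p ≤ n - 1 then
          ((cmp.blocks.map X).prod : MvPolynomial ℕ (ZMod 2)) else 0) := by
    unfold compSumLE
    rw [← Finset.sum_add_distrib]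
    refine Finset.sum_congr rfl fun cmp _ => ?_
    by_cases hq : ∀ p ∈ cmp.blocks, p ≤ n - 1
    · by_cases h1 : cmp.blocks.headI = j
      · rw [if_pos ⟨by omega, hq⟩, if_neg (fun hc => by omega), if_pos ⟨h1, hq⟩, zero_add]
      · by_cases h2 : j ≤ cmp.blocks.headI
        · rw [if_pos ⟨h2, hq⟩, if_pos ⟨by omega, hq⟩, if_neg (fun hc => h1 hc.1), add_zero]
        · rw [if_neg (fun hc => h2 hc.1), if_neg (fun hc => by omega),
            if_neg (fun hc => by omega), add_zero]
    · rw [if_neg (fun hc => hq hc.2), if_neg (fun hc => hq hc.2), if_neg (fun hc => hq hc.2),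
        add_zero]
  rw [hE]
  congr 1
  unfold compSumLE
  rw [Finset.mul_sum]
  simp only [mul_ite, mul_zero]
  rw [← Finset.sum_filter, ← Finset.sum_filter]
  refine Finset.sum_bij' (fun a _ => tailCompJ m j hjm a)
    (fun d _ => consComp' m j (by omega) (by omega) d) ?_ ?_ ?_ ?_ ?_
  · intro a ha
    simp only [Finset.mem_filter, Finset.mem_univ, true_and] at ha ⊢
    refine ⟨headI_pos (show 0 < m - j by omega) _, ?_⟩
    intro p hp
    rw [tailCompJ_blocks hjm a ha.1] at hp
    exact ha.2 p (List.mem_of_mem_tail hp)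
  · intro d hd
    simp only [Finset.mem_filter, Finset.mem_univ, true_and] at hd ⊢
    constructor
    · rfl
    · intro p hp
      rcases List.mem_cons.1 hp with h | h
      · omega
      · exact hd.2 p h
  · intro a ha
    simp only [Finset.mem_filter, Finset.mem_univ, true_and] at ha
    apply Composition.ext
    show j :: (tailCompJ m j hjm a).blocks = a.blocks
    rw [tailCompJ_blocks hjm a ha.1, ← ha.1, ← list_eq_headI_cons]
    exact blocks_ne_nil (show 0 < m by omega) a
  · intro d hd
    apply Composition.ext
    rw [tailCompJ_blocks hjm _ (by rfl)]
    rfl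
  · intro a ha
    simp only [Finset.mem_filter, Finset.mem_univ, true_and] at ha
    rw [tailCompJ_blocks hjm a ha.1]
    conv_lhs => rw [list_eq_headI_cons (blocks_ne_nil (show 0 < m by omega) a)]
    rw [List.map_cons, List.prod_cons, ha.1]

theorem stmt_15 (n : ℕ) (hn : 2 ≤ n)
    (I : Ideal (MvPolynomial ℕ (ZMod 2)))
    (hI : I = Ideal.span
      {(X 0 : MvPolynomial ℕ (ZMod 2)) ^ n +
        ∑ i ∈ Finset.Icc 1 (n - 1), X i * (X 0 : MvPolynomial ℕ (ZMod 2)) ^ (n - i)})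
    (k : ℕ) (hk : 1 ≤ k) :
    Ideal.Quotient.mk I ((X 0 : MvPolynomial ℕ (ZMod 2)) ^ (n - 1 + k)) =
      ∑ j ∈ Finset.Icc 1 (n - 1),
        Ideal.Quotient.mk I ((X 0 : MvPolynomial ℕ (ZMod 2)) ^ (n - j) *
          compSumLE n (k + j - 1) j) := by
  have hrel : Ideal.Quotient.mk I ((X 0 : MvPolynomial ℕ (ZMod 2)) ^ n) =
      Ideal.Quotient.mk I
        (∑ i ∈ Finset.Icc 1 (n - 1), X i * (X 0 : MvPolynomial ℕ (ZMod 2)) ^ (n - i)) := by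
    rw [← sub_eq_zero, ← map_sub, CharTwo.sub_eq_add, hI]
    exact Ideal.Quotient.eq_zero_iff_mem.2 (Ideal.subset_span (Set.mem_singleton _))
  have hconv : ∀ (f : ℕ → MvPolynomial ℕ (ZMod 2) ⧸ I),
      ∑ j ∈ Finset.Icc 1 (n - 1), f j = ∑ i ∈ Finset.range (n - 1), f (i + 1) := by
    intro f
    rw [← Finset.Ico_add_one_right_eq_Icc, Finset.sum_Ico_eq_sum_range]
    simp [add_comm]
  induction k, hk using Nat.le_induction with
  | base =>
    have h1 : n - 1 + 1 = n := by omega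
    rw [h1, hrel, map_sum]
    refine Finset.sum_congr rfl fun j hj => ?_
    rw [Finset.mem_Icc] at hj
    rw [show 1 + j - 1 = j from by omega, compSumLE_self n j hj.1 hj.2, mul_comm]
  | succ k hk ih =>
    have key : ∀ j ∈ Finset.Icc 1 (n - 1),
        Ideal.Quotient.mk I ((X 0 : MvPolynomial ℕ (ZMod 2)) ^ (n - j) *
          compSumLE n (k + 1 + j - 1) j) =
        Ideal.Quotient.mk I ((X 0 : MvPolynomial ℕ (ZMod 2)) ^ (n - j) *
          compSumLE n (k + j) (j + 1)) +
        Ideal.Quotient.mk I (X j * (X 0 : MvPolynomial ℕ (ZMod 2)) ^ (n - j)) *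
          Ideal.Quotient.mk I (compSumLE n k 1) := by
      intro j hj
      rw [Finset.mem_Icc] at hj
      rw [show k + 1 + j - 1 = k + j from by omega,
        compSumLE_split n (k + j) j hj.1 hj.2 (by omega),
        show k + j - j = k from by omega, mul_add, map_add, ← map_mul]
      congr 1
      exact congrArg _ (by ring)
    have hrel' : ∑ i ∈ Finset.Icc 1 (n - 1),
        Ideal.Quotient.mk I (X i * (X 0 : MvPolynomial ℕ (ZMod 2)) ^ (n - i)) =
        Ideal.Quotient.mk I ((X 0 : MvPolynomial ℕ (ZMod 2)) ^ n) := by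
      rw [hrel, map_sum]
    rw [Finset.sum_congr rfl key, Finset.sum_add_distrib, ← Finset.sum_mul, hrel',
      show n - 1 + (k + 1) = (n - 1 + k) + 1 from by omega, pow_succ, map_mul, ih,
      Finset.sum_mul]
    simp only [← map_mul]
    obtain ⟨N, hN⟩ : ∃ N, n - 1 = N + 1 := ⟨n - 2, by omega⟩
    rw [hconv, hconv, hN, Finset.sum_range_succ', Finset.sum_range_succ]
    simp only [Nat.zero_add]
    rw [show N + 1 + 1 = n from by omega,
      compSumLE_top n (k + (N + 1)) hn (by omega), mul_zero, map_zero, add_zero]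
    refine congrArg₂ (· + ·) ?_ ?_
    · refine Finset.sum_congr rfl fun i hi => ?_
      rw [Finset.mem_range] at hi
      refine congrArg _ ?_
      rw [show k + (i + 1 + 1) - 1 = k + (i + 1) from by omega,
        show n - (i + 1) = (n - (i + 1 + 1)) + 1 from by omega, pow_succ]
      ring
    · refine congrArg _ ?_
      rw [show k + 1 - 1 = k from by omega,
        show (X 0 : MvPolynomial ℕ (ZMod 2)) ^ (n - 1) * compSumLE n k 1 * X 0
          = X 0 ^ (n - 1) * X 0 * compSumLE n k 1 from by ring,
        ← pow_succ, show n - 1 + 1 = n from by omega]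
end

section
/- Let B = Z[e_1, …, e_7]/I, where I is the ideal generated by the elements e_i^2 − 2 e_{i−1} e_{i+1} + 2 e_{i−2} e_{i+2} − ⋯ + (−1)^i e_{2i} for 1 ≤ i ≤ 7, with the convention e_0 = 1 and e_j = 0 for j ≥ 8. Then in B, e_1^8 lies in the ideal 2B, i.e., e_1^8 is divisible by 2 in B. -/
open MvPolynomial

/-- The ideal of relations of the Chow ring of the variety of maximal isotropic
subspaces in type `D₈`, with `e_i = X (i-1)` and `e_j = 0` for `j ≥ 8`. -/
noncomputable def relD8 : Ideal (MvPolynomial (Fin 7) ℤ) :=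
  Ideal.span
    { X 0 ^ 2 - X 1,
      X 1 ^ 2 - 2 * X 0 * X 2 + X 3,
      X 2 ^ 2 - 2 * X 1 * X 3 + 2 * X 0 * X 4 - X 5,
      X 3 ^ 2 - 2 * X 2 * X 4 + 2 * X 1 * X 5 - 2 * X 0 * X 6,
      X 4 ^ 2 - 2 * X 3 * X 5 + 2 * X 2 * X 6,
      X 5 ^ 2 - 2 * X 4 * X 6,
      X 6 ^ 2 }

theorem stmt_17 :
    ∃ y : MvPolynomial (Fin 7) ℤ ⧸ relD8,
      Ideal.Quotient.mk relD8 ((X 0 : MvPolynomial (Fin 7) ℤ) ^ 8) = 2 * y := by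
  set p : MvPolynomial (Fin 7) ℤ :=
    2 * X 0 ^ 2 * X 2 ^ 2 - 2 * X 0 * X 2 * X 3 + X 2 * X 4 - X 1 * X 5 + X 0 * X 6 with hp
  refine ⟨Ideal.Quotient.mk relD8 p, ?_⟩
  rw [show (2 : MvPolynomial (Fin 7) ℤ ⧸ relD8) * Ideal.Quotient.mk relD8 p
      = Ideal.Quotient.mk relD8 (2 * p) by simp [map_mul, map_ofNat]]
  rw [Ideal.Quotient.eq]
  have hmem : (X 0 : MvPolynomial (Fin 7) ℤ) ^ 8 - 2 * p =
      ((X 0 ^ 2 + X 1) * (X 0 ^ 4 + X 1 ^ 2)) * (X 0 ^ 2 - X 1)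
      + (X 1 ^ 2 + 2 * X 0 * X 2 - X 3) * (X 1 ^ 2 - 2 * X 0 * X 2 + X 3)
      + 1 * (X 3 ^ 2 - 2 * X 2 * X 4 + 2 * X 1 * X 5 - 2 * X 0 * X 6) := by
    rw [hp]; ring
  rw [hmem]
  unfold relD8
  refine Ideal.add_mem _ (Ideal.add_mem _ ?_ ?_) ?_ <;>
    apply Ideal.mul_mem_left <;> apply Ideal.subset_span <;> simp
end
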